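/- Let n ∈ ℕ and let A, B₁, B₂ be ωcpos, each equipped with a continuous n-ary operation σ_A : Aⁿ → A, σ_{B₁} : B₁ⁿ → B₁, σ_{B₂} : B₂ⁿ → B₂ (continuous with respect to the componentwise order on the n-th power). Suppose h₁ : A → B₁ is a continuous map that preserves the operation (h₁(σ_A(a)) = σ_{B₁}(h₁ ∘ a) for all a ∈ Aⁿ) and has ω-dense image in B₁, and suppose p : B₁ → B₂ is a continuous map such that the composite p ∘ h₁ preserves the operations (p(h₁(σ_A(a))) = σ_{B₂}(p ∘ h₁ ∘ a) for all a ∈ Aⁿ). Then p itself preserves the operations: p(σ_{B₁}(b)) = σ_{B₂}(p ∘ b) for all b ∈ B₁ⁿ. -/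

import Mathlib

open OmegaCompletePartialOrder

universe u

/-- A subset `S` of an ωcpo `P` is a sub-ωcpo if it is closed under suprema of ω-chains
contained in it. -/
def IsSubOmegaCpo {P : Type u} [OmegaCompletePartialOrder P] (S : Set P) : Prop :=
  ∀ c : Chain P, (∀ i ∈ c, i ∈ S) → ωSup c ∈ S

/-- A subset `X` of an ωcpo `P` is ω-dense if the only sub-ωcpo of `P` containing `X` is `P`
itself. -/
def OmegaDense {P : Type u} [OmegaCompletePartialOrder P] (X : Set P) : Prop :=
  ∀ S : Set P, IsSubOmegaCpo S → X ⊆ S → S = Set.univ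

/-- The equalizer of two continuous maps is a sub-ωcpo. -/
lemma isSubOmegaCpo_eq {P Q : Type u} [OmegaCompletePartialOrder P]
    [OmegaCompletePartialOrder Q] {F G : P → Q}
    (hF : ωScottContinuous F) (hG : ωScottContinuous G) :
    IsSubOmegaCpo {x | F x = G x} := by
  intro c hc
  show F (ωSup c) = G (ωSup c)
  rw [hF.map_ωSup, hG.map_ωSup]
  congr 1
  apply Chain.ext
  funext j
  exact hc (c j) ⟨j, rfl⟩

lemma update_cont {n : ℕ} {P : Type u} [OmegaCompletePartialOrder P]
    (b : Fin n → P) (k : Fin n) :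
    ωScottContinuous (fun x : P => Function.update b k x) := by
  have hmono : Monotone (fun x : P => Function.update b k x) := by
    intro x y hxy i
    rcases eq_or_ne i k with rfl | hik
    · simpa using hxy
    · simp [Function.update_of_ne hik]
  apply ωScottContinuous.of_monotone_map_ωSup
  refine ⟨hmono, fun c => ?_⟩
  funext i
  show Function.update b k (ωSup c) i = ωSup ((c.map ⟨_, hmono⟩).map (Pi.evalOrderHom i))
  rcases eq_or_ne i k with rfl | hik
  · simp only [Function.update_self]
    congr 1
    apply Chain.ext
    funext j
    simp [Chain.map, Function.update_self]
    exact (Function.update_self i (c j) b).symm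
  · simp only [Function.update_of_ne hik]
    apply le_antisymm
    · have : b i ≤ Function.update b k (c 0) i := by rw [Function.update_of_ne hik]
      exact le_trans this (le_ωSup ((c.map ⟨_, hmono⟩).map (Pi.evalOrderHom i)) 0)
    · apply ωSup_le
      intro j
      show Function.update b k (c j) i ≤ b i
      rw [Function.update_of_ne hik]

theorem continuous_map_preserves_ops_of_omegaDense {n : ℕ} {A B₁ B₂ : Type u}
    [OmegaCompletePartialOrder A] [OmegaCompletePartialOrder B₁]
    [OmegaCompletePartialOrder B₂]
    (σA : (Fin n → A) → A) (hσA : ωScottContinuous σA)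
    (σB₁ : (Fin n → B₁) → B₁) (hσB₁ : ωScottContinuous σB₁)
    (σB₂ : (Fin n → B₂) → B₂) (hσB₂ : ωScottContinuous σB₂)
    (h₁ : A → B₁) (hh₁ : ωScottContinuous h₁)
    (hhom : ∀ a : Fin n → A, h₁ (σA a) = σB₁ (h₁ ∘ a))
    (hdense : OmegaDense (Set.range h₁))
    (p : B₁ → B₂) (hp : ωScottContinuous p)
    (hcomp : ∀ a : Fin n → A, p (h₁ (σA a)) = σB₂ (p ∘ h₁ ∘ a)) :
    ∀ b : Fin n → B₁, p (σB₁ b) = σB₂ (p ∘ b) := by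
  have key : ∀ k : ℕ, ∀ b : Fin n → B₁,
      (∀ i : Fin n, k ≤ i.val → b i ∈ Set.range h₁) → p (σB₁ b) = σB₂ (p ∘ b) := by
    intro k
    induction k with
    | zero =>
      intro b hb
      choose a ha using fun i => hb i (Nat.zero_le _)
      have hba : b = h₁ ∘ a := by funext i; exact (ha i).symm
      rw [hba, ← hhom, hcomp]
    | succ k ih =>
      intro b hb
      by_cases hkn : k < n
      · set κ : Fin n := ⟨k, hkn⟩ with hκ
        set S : Set B₁ :=
          {x | p (σB₁ (Function.update b κ x)) = σB₂ (p ∘ Function.update b κ x)} with hS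
        have hsub : IsSubOmegaCpo S := by
          have hFcont : ωScottContinuous (fun x : B₁ => p (σB₁ (Function.update b κ x))) :=
            (hp.comp hσB₁).comp (update_cont b κ)
          have hGcont : ωScottContinuous (fun x : B₁ => σB₂ (p ∘ Function.update b κ x)) := by
            have : (fun x : B₁ => σB₂ (p ∘ Function.update b κ x)) =
                (fun x : B₂ => σB₂ (Function.update (p ∘ b) κ x)) ∘ p := by
              funext x
              simp [Function.comp_update]
            rw [this]
            exact (hσB₂.comp (update_cont (p ∘ b) κ)).comp hp
          exact isSubOmegaCpo_eq hFcont hGcont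
        have hrange : Set.range h₁ ⊆ S := by
          rintro _ ⟨a, rfl⟩
          apply ih
          intro i hi
          rcases eq_or_ne i κ with rfl | hiκ
          · simp only [Function.update_self]
            exact ⟨a, rfl⟩
          · rw [Function.update_of_ne hiκ]
            apply hb
            rcases Nat.lt_or_ge i.val (k + 1) with h | h
            · exfalso
              apply hiκ
              apply Fin.ext
              show i.val = k
              omega
            · exact h
        have := hdense S hsub hrange
        have hbk : b κ ∈ S := this ▸ Set.mem_univ _
        have hupd : Function.update b κ (b κ) = b := Function.update_eq_self _ _
        rw [hS] at hbk
        simpa [hupd] using hbk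
      · apply ih
        intro i hi
        exact absurd (lt_of_le_of_lt hi i.isLt) (by omega)
  intro b
  exact key n b (fun i hi => absurd (lt_of_le_of_lt hi i.isLt) (by omega))
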